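/- Let $\sigma_{1,1} = \frac{2KL}{\beta_0^2} + \frac{K(K+2L)}{2(1-\varrho_0)^2}$, $\sigma_{2,2} = \frac{KL}{1-\varrho_0^2} + \frac{K(K+2L)\beta_0^2}{2(1-\varrho_0)^4}$, and $\sigma_{1,2} = \frac{K(K+2L)\beta_0}{2(1-\varrho_0)^3}$, where $K, L > 0$, $\beta_0 \ne 0$, $\varrho_0 \in (-1,1)$. Then $\sigma_{1,1}\sigma_{2,2} - \sigma_{1,2}^2 > 0$; in particular the $2\times 2$ matrix $\begin{pmatrix}\sigma_{1,1} & \sigma_{1,2} \\ \sigma_{1,2} & \sigma_{2,2}\end{pmatrix}$ is positive definite and invertible. -/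

import Mathlib

lemma quad_pos_aux {a b c : ℝ} (ha : 0 < a) (hd : 0 < a * b - c ^ 2)
    (x y : ℝ) (h : x ≠ 0 ∨ y ≠ 0) :
    0 < a * x ^ 2 + 2 * c * x * y + b * y ^ 2 := by
  rcases eq_or_ne y 0 with hy | hy
  · subst hy
    have hx : x ≠ 0 := h.resolve_right (by simp)
    have : 0 < x ^ 2 := pow_pos (abs_pos.mpr hx) 2 |>.trans_eq (by rw [sq_abs])
    nlinarith
  · have hy2 : 0 < y ^ 2 := by positivity
    nlinarith [sq_nonneg (a * x + c * y), mul_pos hd hy2]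

theorem stmt18
    (K L β₀ ϱ₀ : ℝ) (hK : 0 < K) (hL : 0 < L) (hβ₀ : β₀ ≠ 0)
    (hϱ₀ : ϱ₀ ∈ Set.Ioo (-1 : ℝ) 1)
    (σ11 σ22 σ12 : ℝ)
    (h11 : σ11 = 2 * K * L / β₀ ^ 2 + K * (K + 2 * L) / (2 * (1 - ϱ₀) ^ 2))
    (h22 : σ22 = K * L / (1 - ϱ₀ ^ 2) + K * (K + 2 * L) * β₀ ^ 2 / (2 * (1 - ϱ₀) ^ 4))
    (h12 : σ12 = K * (K + 2 * L) * β₀ / (2 * (1 - ϱ₀) ^ 3)) :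
    0 < σ11 * σ22 - σ12 ^ 2 ∧
    (!![σ11, σ12; σ12, σ22] : Matrix (Fin 2) (Fin 2) ℝ).PosDef ∧
    IsUnit (!![σ11, σ12; σ12, σ22] : Matrix (Fin 2) (Fin 2) ℝ) := by
  obtain ⟨hm, hp⟩ := hϱ₀
  have hu : (0:ℝ) < 1 - ϱ₀ := by linarith
  have hv : (0:ℝ) < 1 + ϱ₀ := by linarith
  have hsq : (0:ℝ) < 1 - ϱ₀ ^ 2 := by nlinarith
  have hb2 : (0:ℝ) < β₀ ^ 2 := by positivity
  have key : σ11 * σ22 - σ12 ^ 2 =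
      (2 * K * L / β₀ ^ 2) * (K * L / (1 - ϱ₀ ^ 2)) +
      (2 * K * L / β₀ ^ 2) * (K * (K + 2 * L) * β₀ ^ 2 / (2 * (1 - ϱ₀) ^ 4)) +
      (K * (K + 2 * L) / (2 * (1 - ϱ₀) ^ 2)) * (K * L / (1 - ϱ₀ ^ 2)) := by
    subst h11 h22 h12
    field_simp
    ring
  have hdet : 0 < σ11 * σ22 - σ12 ^ 2 := by
    rw [key]
    have hKL : (0:ℝ) < K + 2 * L := by linarith
    positivity
  have h11pos : 0 < σ11 := by
    rw [h11]
    have hKL : (0:ℝ) < K + 2 * L := by linarith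
    positivity
  have hposdef : (!![σ11, σ12; σ12, σ22] : Matrix (Fin 2) (Fin 2) ℝ).PosDef := by
    constructor
    · ext i j
      fin_cases i <;> fin_cases j <;>
        simp [Matrix.conjTranspose_apply]
    · intro x hx
      have hne : x 0 ≠ 0 ∨ x 1 ≠ 0 := by
        by_contra hc
        push_neg at hc
        apply hx
        ext i
        fin_cases i <;> simp [hc.1, hc.2]
      have := quad_pos_aux h11pos hdet (x 0) (x 1) hne
      have hdp : (x.sum fun i xi ↦ x.sum fun j xj ↦
            star xi * (!![σ11, σ12; σ12, σ22] : Matrix (Fin 2) (Fin 2) ℝ) i j * xj)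
          = σ11 * (x 0) ^ 2 + 2 * σ12 * (x 0) * (x 1) + σ22 * (x 1) ^ 2 := by
        simp [Finsupp.sum_fintype, Fin.sum_univ_two]
        ring
      rw [hdp]
      exact this
  exact ⟨hdet, hposdef, hposdef.isUnit⟩
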